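/- arXiv:1104.0763 — 2 statements merged into one kernel-verified Lean document; each statement's English description precedes it below -/
import Mathlib

section
/- Fix ρ < 0 and let W_opt(s) = ((ρ−1)/ρ²)·(ρ−1 + (1−2ρ)·s^{−ρ}). For any continuous W : (0,1) → ℝ with ∫₀¹ W(s) ds = 1 and ∫₀¹ W(s)·s^{−ρ} ds = 0, one has ∫₀¹ W(s)² ds = ((ρ−1)/ρ)² + ∫₀¹ (W(s) − W_opt(s))² ds. Hence W_opt is the unique continuous minimizer of ∫₀¹ W² subject to these two constraints, and its minimum value is ((ρ−1)/ρ)² = (1 − 1/ρ)². -/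
open MeasureTheory Set

lemma rpow_facts (r : ℝ) (hr : 0 < r) :
    IntegrableOn (fun s : ℝ => s ^ r) (Ioo 0 1) volume ∧
    ∫ s in Ioo (0:ℝ) 1, s ^ r = 1 / (r + 1) := by
  have h1 : (-1:ℝ) < r := by linarith
  constructor
  · have := (intervalIntegrable_iff_integrableOn_Ioc_of_le
      (by norm_num : (0:ℝ) ≤ 1)).mp (intervalIntegral.intervalIntegrable_rpow' (a := 0) (b := 1) h1)
    exact this.mono_set Ioo_subset_Ioc_self
  · rw [← integral_Ioc_eq_integral_Ioo,
      ← intervalIntegral.integral_of_le (by norm_num : (0:ℝ) ≤ 1),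
      integral_rpow (Or.inl h1), Real.one_rpow, Real.zero_rpow (by linarith)]
    ring

theorem stmt_2 (ρ : ℝ) (hρ : ρ < 0) (W : ℝ → ℝ)
    (Wopt : ℝ → ℝ)
    (hWopt : ∀ s, Wopt s = ((ρ - 1) / ρ ^ 2) * (ρ - 1 + (1 - 2 * ρ) * s ^ (-ρ)))
    (hc : ContinuousOn W (Ioo 0 1))
    (hi : IntegrableOn W (Ioo 0 1))
    (hi2 : IntegrableOn (fun s => (W s) ^ 2) (Ioo 0 1))
    (hiρ : IntegrableOn (fun s => W s * s ^ (-ρ)) (Ioo 0 1))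
    (h1 : ∫ s in Ioo (0:ℝ) 1, W s = 1)
    (h2 : ∫ s in Ioo (0:ℝ) 1, W s * s ^ (-ρ) = 0) :
    (∫ s in Ioo (0:ℝ) 1, (W s) ^ 2)
      = ((ρ - 1) / ρ) ^ 2 + ∫ s in Ioo (0:ℝ) 1, (W s - Wopt s) ^ 2 ∧
    ((∫ s in Ioo (0:ℝ) 1, (W s) ^ 2) ≤ ((ρ - 1) / ρ) ^ 2 →
      ∀ s ∈ Ioo (0:ℝ) 1, W s = Wopt s) ∧
    ((ρ - 1) / ρ) ^ 2 = (1 - 1 / ρ) ^ 2 := by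
  have hρ0 : ρ ≠ 0 := ne_of_lt hρ
  set a : ℝ := ((ρ - 1) / ρ ^ 2) * (ρ - 1) with ha
  set b : ℝ := ((ρ - 1) / ρ ^ 2) * (1 - 2 * ρ) with hb
  have hWopt' : ∀ s, Wopt s = a + b * s ^ (-ρ) := by
    intro s; rw [hWopt]; ring
  -- basic integrals of rpow
  have F1 := rpow_facts (-ρ) (by linarith)
  have F2 := rpow_facts (-ρ + -ρ) (by linarith)
  have hint1 : IntegrableOn (fun s : ℝ => s ^ (-ρ)) (Ioo 0 1) volume := F1.1
  have hval1 : ∫ s in Ioo (0:ℝ) 1, s ^ (-ρ) = 1 / (1 - ρ) := by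
    rw [F1.2]; ring_nf
  have hint2 : IntegrableOn (fun s : ℝ => s ^ (-ρ) * s ^ (-ρ)) (Ioo 0 1) volume := by
    refine F2.1.congr_fun (fun s hs => ?_) measurableSet_Ioo
    dsimp only; rw [Real.rpow_add hs.1]
  have hval2 : ∫ s in Ioo (0:ℝ) 1, s ^ (-ρ) * s ^ (-ρ) = 1 / (1 - 2 * ρ) := by
    rw [setIntegral_congr_fun measurableSet_Ioo
      (fun s hs => (Real.rpow_add hs.1 (-ρ) (-ρ)).symm), F2.2]
    ring_nf
  have hvol : (volume (Ioo (0:ℝ) 1)).toReal = 1 := by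
    simp [Real.volume_Ioo]
  -- integrability of pieces
  have hg_int : IntegrableOn (fun s => (2*a) * W s + (2*b) * (W s * s ^ (-ρ))) (Ioo 0 1) volume :=
    (hi.const_mul _).add (hiρ.const_mul _)
  have hh_int : IntegrableOn
      (fun s : ℝ => a^2 + ((2*a*b) * s ^ (-ρ) + b^2 * (s ^ (-ρ) * s ^ (-ρ)))) (Ioo 0 1) volume := by
    exact (integrableOn_const (by simp [Real.volume_Ioo])).add
      ((hint1.const_mul _).add (hint2.const_mul _))
  have hA : IntegrableOn (fun s => (W s)^2 - ((2*a) * W s + (2*b) * (W s * s ^ (-ρ))))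
      (Ioo 0 1) volume := hi2.sub hg_int
  have hB : IntegrableOn (fun s => (2*a) * W s) (Ioo 0 1) volume := hi.const_mul _
  have hC : IntegrableOn (fun s => (2*b) * (W s * s ^ (-ρ))) (Ioo 0 1) volume := hiρ.const_mul _
  have hD : IntegrableOn (fun _ : ℝ => a^2) (Ioo 0 1) volume :=
    integrableOn_const (by simp [Real.volume_Ioo])
  have hE : IntegrableOn (fun s : ℝ => (2*a*b) * s ^ (-ρ)) (Ioo 0 1) volume := hint1.const_mul _
  have hF : IntegrableOn (fun s : ℝ => b^2 * (s ^ (-ρ) * s ^ (-ρ))) (Ioo 0 1) volume :=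
    hint2.const_mul _
  have hBC : IntegrableOn (fun s => (2*a) * W s + (2*b) * (W s * s ^ (-ρ))) (Ioo 0 1) volume :=
    hB.add hC
  have hEF : IntegrableOn (fun s : ℝ => (2*a*b) * s ^ (-ρ) + b^2 * (s ^ (-ρ) * s ^ (-ρ)))
      (Ioo 0 1) volume := hE.add hF
  have hsum : IntegrableOn (fun s => (W s)^2 - ((2*a) * W s + (2*b) * (W s * s ^ (-ρ)))
      + (a^2 + ((2*a*b) * s ^ (-ρ) + b^2 * (s ^ (-ρ) * s ^ (-ρ))))) (Ioo 0 1) volume :=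
    hA.add hh_int
  have hdiff_int : IntegrableOn (fun s => (W s - Wopt s) ^ 2) (Ioo 0 1) volume := by
    refine hsum.congr_fun (fun s hs => ?_) measurableSet_Ioo
    rw [hWopt']; ring
  -- key identity
  have key : (∫ s in Ioo (0:ℝ) 1, (W s - Wopt s) ^ 2)
      = (∫ s in Ioo (0:ℝ) 1, (W s) ^ 2) - a := by
    have congr1 : (∫ s in Ioo (0:ℝ) 1, (W s - Wopt s) ^ 2)
        = ∫ s in Ioo (0:ℝ) 1, ((W s)^2 - ((2*a) * W s + (2*b) * (W s * s ^ (-ρ)))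
            + (a^2 + ((2*a*b) * s ^ (-ρ) + b^2 * (s ^ (-ρ) * s ^ (-ρ))))) := by
      refine setIntegral_congr_fun measurableSet_Ioo (fun s hs => ?_)
      rw [hWopt']; ring
    rw [congr1, integral_add hA hh_int, integral_sub hi2 hBC, integral_add hB hC,
      integral_add hD hEF, integral_add hE hF,
      integral_const_mul, integral_const_mul, integral_const_mul, integral_const_mul,
      h1, h2, hval1, hval2, setIntegral_const, measureReal_def, hvol, one_smul]
    have h2ρ : 1 - 2 * ρ ≠ 0 := by intro h; nlinarith
    have h1ρ : 1 - ρ ≠ 0 := by intro h; nlinarith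
    rw [ha, hb]
    field_simp
    ring
  have haval : a = ((ρ - 1) / ρ) ^ 2 := by
    rw [ha]; field_simp
  refine ⟨by rw [key, haval]; ring, ?_, by field_simp⟩
  intro hle s hs
  have hnonneg : 0 ≤ ∫ s in Ioo (0:ℝ) 1, (W s - Wopt s) ^ 2 :=
    setIntegral_nonneg measurableSet_Ioo (fun s _ => sq_nonneg _)
  have hzero : (∫ s in Ioo (0:ℝ) 1, (W s - Wopt s) ^ 2) = 0 := by
    rw [key, haval] at *; linarith
  have hae : (fun s => (W s - Wopt s) ^ 2) =ᵐ[volume.restrict (Ioo (0:ℝ) 1)] 0 := by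
    have := (integral_eq_zero_iff_of_nonneg (fun s => sq_nonneg _) hdiff_int).mp hzero
    exact this
  have hcWopt : ContinuousOn Wopt (Ioo (0:ℝ) 1) := by
    have : ContinuousOn (fun s : ℝ => a + b * s ^ (-ρ)) (Ioo 0 1) := by
      refine continuousOn_const.add (continuousOn_const.mul ?_)
      exact fun x hx => (Real.continuousAt_rpow_const x (-ρ) (Or.inl hx.1.ne')).continuousWithinAt
    exact this.congr (fun s _ => hWopt' s)
  have hcdiff : ContinuousOn (fun s => (W s - Wopt s) ^ 2) (Ioo (0:ℝ) 1) :=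
    (hc.sub hcWopt).pow 2
  have heq := Measure.eqOn_Ioo_of_ae_eq (μ := volume) hae hcdiff continuousOn_const hs
  have : (W s - Wopt s) ^ 2 = 0 := heq
  have := pow_eq_zero_iff (n := 2) (by norm_num) |>.mp this
  linarith
end

section
/- The function h(x) = −(1/log(x/k))·(1/x − 1/k) is decreasing on the interval [1, k) for any real k > 1. -/
theorem stmt_13 (k : ℝ) (hk : 1 < k) :
    StrictAntiOn (fun x : ℝ => -(1 / Real.log (x / k)) * (1 / x - 1 / k))
      (Set.Ico 1 k) := by
  have hk0 : (0:ℝ) < k := lt_trans one_pos hk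
  -- basic facts on the set
  have key : ∀ x ∈ Set.Ico (1:ℝ) k, 0 < x ∧ Real.log (x / k) < 0 := by
    intro x hx
    obtain ⟨hx1, hxk⟩ := hx
    have hx0 : 0 < x := lt_of_lt_of_le one_pos hx1
    refine ⟨hx0, Real.log_neg (div_pos hx0 hk0) ((div_lt_one hk0).2 hxk)⟩
  apply strictAntiOn_of_deriv_neg (convex_Ico 1 k)
  · -- continuity
    apply ContinuousOn.mul
    · apply ContinuousOn.neg
      apply ContinuousOn.div continuousOn_const
      · apply Real.continuousOn_log.comp (continuousOn_id.div_const k)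
        intro x hx
        have := key x hx
        have : (0:ℝ) < x / k := div_pos this.1 hk0
        simpa using ne_of_gt this
      · intro x hx
        exact ne_of_lt (key x hx).2
    · apply ContinuousOn.sub _ continuousOn_const
      exact continuousOn_const.div continuousOn_id fun x hx => ne_of_gt (key x hx).1
  · intro x hx
    rw [interior_Ico] at hx
    obtain ⟨hx1, hxk⟩ := hx
    have hx0 : 0 < x := lt_trans one_pos hx1
    have hxk0 : 0 < x / k := div_pos hx0 hk0
    have hxk1 : x / k < 1 := (div_lt_one hk0).2 hxk
    have hL : Real.log (x / k) < 0 := Real.log_neg hxk0 hxk1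
    have hLne : Real.log (x / k) ≠ 0 := ne_of_lt hL
    have h1 : HasDerivAt (fun x : ℝ => x / k) (1 / k) x := by
      simpa using (hasDerivAt_id x).div_const k
    have h2 : HasDerivAt (fun x : ℝ => Real.log (x / k)) ((x / k)⁻¹ * (1 / k)) x :=
      by have := (Real.hasDerivAt_log (ne_of_gt hxk0)).comp x h1; exact this
    have h3 : HasDerivAt (fun x : ℝ => 1 / Real.log (x / k))
        (-((x / k)⁻¹ * (1 / k)) / (Real.log (x / k)) ^ 2) x := by
      simpa [one_div, Pi.inv_def] using h2.inv hLne
    have h4 : HasDerivAt (fun x : ℝ => 1 / x - 1 / k) (-(x ^ 2)⁻¹) x := by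
      simpa [one_div] using (hasDerivAt_inv (ne_of_gt hx0)).sub_const (1 / k)
    have h5 := (h3.neg).mul h4
    rw [(show HasDerivAt (fun x : ℝ => -(1 / Real.log (x / k)) * (1 / x - 1 / k)) (-(-((x / k)⁻¹ * (1 / k)) / Real.log (x / k) ^ 2) * (1 / x - 1 / k) + -(1 / Real.log (x / k)) * -(x ^ 2)⁻¹) x from h5).deriv]
    -- key inequality: log (x/k) < x/k - 1
    have hkey : Real.log (x / k) < x / k - 1 :=
      Real.log_lt_sub_one_of_pos hxk0 (ne_of_lt hxk1)
    have heq : -(-((x / k)⁻¹ * (1 / k)) / Real.log (x / k) ^ 2) * (1 / x - 1 / k) +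
        -(1 / Real.log (x / k)) * -(x ^ 2)⁻¹ =
        (Real.log (x / k) + 1 - x / k) / (x ^ 2 * Real.log (x / k) ^ 2) := by
      field_simp
      ring
    rw [heq]
    apply div_neg_of_neg_of_pos
    · linarith
    · positivity
end
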